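/- arXiv:0901.0661 — 2 statements merged into one kernel-verified Lean document; each statement's English description precedes it below -/
import Mathlib

section
/- Consider percolating homogeneous long-range percolation on ℤ^d with non-increasing connection function λ(r) = r^{−β} L(r), where L is slowly varying and β > d. Let α > 0 and d < β' < β'' < min(2d, β) with λ(r) ≤ α r^{−β''} for all r ≥ 1, let c = c(α, β'', β') be the constant for which the bound P(D(0,x) ≤ n) ≤ (K(n))^{β'} ‖x‖^{−β'} holds for all n ∈ ℕ and ‖x‖ > K(n), where γ := log(2d/β')/log 2 and K(n) := exp(c n^γ) + 1. Then there exists a finite constant C such that E(|B_k|) ≤ C (K(k))^d for all k ∈ ℕ; consequently, since γ < 1, limsup_{k→∞} (E(|B_k|))^{1/k} = 1. -/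
open MeasureTheory ProbabilityTheory Filter Set
open scoped ENNReal NNReal

noncomputable section

namespace LongRangePercolation

/-- Vertices of the lattice `ℤ^d`. -/
abbrev Vtx (d : ℕ) := Fin d → ℤ

variable {d : ℕ} {Ω : Type*}

/-- The random graph determined by an edge configuration `ω`:
`x` and `y` are adjacent iff they are distinct and the edge `{x, y}` is open in `ω`. -/
def percGraph (edge : Sym2 (Vtx d) → Ω → Bool) (ω : Ω) : SimpleGraph (Vtx d) where
  Adj x y := x ≠ y ∧ edge s(x, y) ω = true
  symm := by
    constructor
    intro x y h
    refine ⟨h.1.symm, ?_⟩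
    rw [Sym2.eq_swap]
    exact h.2
  loopless := by constructor; intro x h; exact h.1 rfl

/-- The event that the origin belongs to an infinite cluster. -/
def percEvent (edge : Sym2 (Vtx d) → Ω → Bool) : Set Ω :=
  {ω | {y : Vtx d | (percGraph edge ω).Reachable 0 y}.Infinite}

/-- The `k`-ball around the origin in the graph metric. -/
def ball (edge : Sym2 (Vtx d) → Ω → Bool) (ω : Ω) (k : ℕ) : Set (Vtx d) :=
  {y | (percGraph edge ω).edist 0 y ≤ (k : ℕ∞)}

/-- Expected size of the `k`-ball, `E|B_k|`, as an extended nonnegative real. -/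
def EB [MeasurableSpace Ω] (μ : Measure Ω) (edge : Sym2 (Vtx d) → Ω → Bool) (k : ℕ) : ℝ≥0∞ :=
  ∫⁻ ω, ((ball edge ω k).encard : ℝ≥0∞) ∂μ

/-- `|B_k|^{1/k}` as an extended nonnegative real. -/
def growth (edge : Sym2 (Vtx d) → Ω → Bool) (ω : Ω) (k : ℕ) : ℝ≥0∞ :=
  ((ball edge ω k).encard : ℝ≥0∞) ^ (1 / (k : ℝ))

/-- A function `L : (0,∞) → (0,∞)` is slowly varying if `L(cr)/L(r) → 1` as `r → ∞`
for every `c > 0`. -/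
def SlowlyVarying (L : ℝ → ℝ) : Prop :=
  ∀ c : ℝ, 0 < c → Tendsto (fun r => L (c * r) / L r) atTop (nhds 1)

/-- Bundled hypotheses asserting that `(μ, edge)` is a homogeneous long-range percolation
model on `ℤ^d` with connection function `lam`: the edge indicators are independent, and an
edge between distinct `x` and `y` is present with probability `1 - exp(-λ(‖x - y‖))`,
where `‖·‖` is the `L^∞` norm. -/
structure IsLRPModel (d : ℕ) {Ω : Type*} [MeasurableSpace Ω] (μ : Measure Ω)
    (edge : Sym2 (Vtx d) → Ω → Bool) (lam : ℝ → ℝ) : Prop where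
  d_pos : 0 < d
  prob : IsProbabilityMeasure μ
  meas : ∀ e, Measurable (edge e)
  indep : iIndepFun edge μ
  lam_pos : ∀ r : ℝ, 0 < r → 0 < lam r
  edge_prob : ∀ x y : Vtx d, x ≠ y →
    μ {ω | edge s(x, y) ω = true} = ENNReal.ofReal (1 - Real.exp (-(lam ‖x - y‖)))

/-- The percolation graph restricted to a vertex set `V` (only edges inside `V`). -/
def restGraph (edge : Sym2 (Vtx d) → Ω → Bool) (ω : Ω) (V : Set (Vtx d)) :
    SimpleGraph (Vtx d) where
  Adj x y := x ∈ V ∧ y ∈ V ∧ (percGraph edge ω).Adj x y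
  symm := by
    constructor
    intro x y h
    exact ⟨h.2.1, h.1, (percGraph edge ω).adj_symm h.2.2⟩
  loopless := by
    constructor
    intro x h
    exact (percGraph edge ω).irrefl h.2.2

/-- The cluster (connected component, as a vertex set) of `x` in a graph `G`. -/
def cluster (G : SimpleGraph (Vtx d)) (x : Vtx d) : Set (Vtx d) :=
  {y | G.Reachable x y}

/-- The box `V_K = ℤ^d ∩ [⌈-K/2⌉, ⌈K/2⌉)^d`. -/
def VK (d : ℕ) (r : ℕ) : Set (Vtx d) :=
  {x | ∀ i, ⌈-(r : ℝ) / 2⌉ ≤ x i ∧ x i < ⌈(r : ℝ) / 2⌉}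

/-- The size of the largest cluster of the percolation graph restricted to `V_r`. -/
def maxClSize (edge : Sym2 (Vtx d) → Ω → Bool) (ω : Ω) (r : ℕ) : ℕ∞ :=
  ⨆ x ∈ VK d r, (cluster (restGraph edge ω (VK d r)) x).encard

/-! ### The renormalisation construction -/

/-- `l_i = l_0^(2^i)`. -/
def lseq (l0 i : ℕ) : ℕ := l0 ^ (2 ^ i)

/-- The level-`i` block with index `n`:
`Λ_i(n) = ℤ^d ∩ ([-(l_i - 1)/2, (l_i - 1)/2]^d + n l_i)` (for odd `l_0`). -/
def block (d l0 i : ℕ) (n : Vtx d) : Set (Vtx d) :=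
  {x | ∀ j, |x j - n j * (lseq l0 i : ℤ)| ≤ ((lseq l0 i : ℤ) - 1) / 2}

/-- The index of the level-`i` block containing `x`. -/
def blockIdx (d l0 i : ℕ) (x : Vtx d) : Vtx d :=
  fun j => Int.fdiv (x j + ((lseq l0 i : ℤ) - 1) / 2) (lseq l0 i : ℤ)

/-- `h_i = (l_0^d + 1) 2^i - 1`. -/
def hseq (d l0 i : ℕ) : ℕ := (l0 ^ d + 1) * 2 ^ i - 1

/-- `D_i(x)`: the set of vertices of the level-`i` block of `x` within graph distance `h_i`
of `x` in the graph restricted to that block. -/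
def Dset (edge : Sym2 (Vtx d) → Ω → Bool) (l0 : ℕ) (ω : Ω) (i : ℕ) (x : Vtx d) :
    Set (Vtx d) :=
  {y | y ∈ block d l0 i (blockIdx d l0 i x) ∧
    (restGraph edge ω (block d l0 i (blockIdx d l0 i x))).edist x y ≤ (hseq d l0 i : ℕ∞)}

/-- `M_i = Π_{j=0}^i m_j`, defined by `M_0 = ρ l_0^d`, `M_{i+1} = c_0 L(l_{i+1}) M_i^2`
with `c_0 = 2ρ/25`. -/
def Mseq (d l0 : ℕ) (L : ℝ → ℝ) (ρ : ℝ) : ℕ → ℝ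
  | 0 => ρ * (l0 : ℝ) ^ d
  | i + 1 => (2 * ρ / 25) * L ((lseq l0 (i + 1) : ℕ) : ℝ) * (Mseq d l0 L ρ i) ^ 2

/-- `m_0 = ρ l_0^d` and `m_{i+1} = c_0 L(l_{i+1}) M_i` with `c_0 = 2ρ/25`. -/
def mseq (d l0 : ℕ) (L : ℝ → ℝ) (ρ : ℝ) : ℕ → ℝ
  | 0 => ρ * (l0 : ℝ) ^ d
  | i + 1 => (2 * ρ / 25) * L ((lseq l0 (i + 1) : ℕ) : ℝ) * Mseq d l0 L ρ i

/-- `x` is good up to level `i` in configuration `ω`. -/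
def good (edge : Sym2 (Vtx d) → Ω → Bool) (l0 : ℕ) (L : ℝ → ℝ) (ρ : ℝ) :
    ℕ → Vtx d → Ω → Prop
  | 0, x, ω =>
      ENNReal.ofReal (mseq d l0 L ρ 0) ≤ ((Dset edge l0 ω 0 x).encard : ℝ≥0∞)
  | i + 1, x, ω =>
      good edge l0 L ρ i x ω ∧
      ENNReal.ofReal (mseq d l0 L ρ (i + 1)) ≤
        (({n : Vtx d |
            block d l0 i n ⊆ block d l0 (i + 1) (blockIdx d l0 (i + 1) x) ∧
            ∃ y ∈ block d l0 i n,
              y ∉ block d l0 i 0 ∪ block d l0 i (blockIdx d l0 i x) ∧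
              good edge l0 L ρ i y ω ∧
              ∃ z ∈ Dset edge l0 ω i x, (percGraph edge ω).Adj y z}).encard : ℝ≥0∞)

/-- A vertex is ultimately good if it is good up to every level. -/
def ultGood (edge : Sym2 (Vtx d) → Ω → Bool) (l0 : ℕ) (L : ℝ → ℝ) (ρ : ℝ)
    (x : Vtx d) (ω : Ω) : Prop :=
  ∀ i : ℕ, good edge l0 L ρ i x ω

end LongRangePercolation

open LongRangePercolation

namespace Stmt16Aux
open LongRangePercolation

variable {d : ℕ} {Ω : Type*}

/-- reachability within `n` steps -/
def reachIn (edge : Sym2 (Vtx d) → Ω → Bool) : ℕ → Vtx d → Vtx d → Ω → Prop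
  | 0, x, y, _ => x = y
  | n+1, x, y, ω => reachIn edge n x y ω ∨
      ∃ z : Vtx d, (percGraph edge ω).Adj x z ∧ reachIn edge n z y ω

lemma reachIn_iff_exists_walk (edge : Sym2 (Vtx d) → Ω → Bool) (n : ℕ) (x y : Vtx d) (ω : Ω) :
    reachIn edge n x y ω ↔ ∃ p : (percGraph edge ω).Walk x y, p.length ≤ n := by
  induction n generalizing x with
  | zero =>
    constructor
    · rintro rfl; exact ⟨SimpleGraph.Walk.nil, le_refl 0⟩
    · rintro ⟨p, hp⟩
      exact SimpleGraph.Walk.eq_of_length_eq_zero (Nat.le_zero.mp hp)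
  | succ n ih =>
    constructor
    · rintro (h | ⟨z, hadj, hz⟩)
      · obtain ⟨p, hp⟩ := (ih x).mp h; exact ⟨p, hp.trans (Nat.le_succ n)⟩
      · obtain ⟨p, hp⟩ := (ih z).mp hz
        exact ⟨SimpleGraph.Walk.cons hadj p, by simpa using Nat.succ_le_succ hp⟩
    · rintro ⟨p, hp⟩
      cases p with
      | nil => exact Or.inl ((ih _).mpr ⟨SimpleGraph.Walk.nil, Nat.zero_le n⟩)
      | cons hadj q =>
        exact Or.inr ⟨_, hadj, (ih _).mpr ⟨q, Nat.succ_le_succ_iff.mp (by simpa using hp)⟩⟩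

lemma edist_le_iff_reachIn (edge : Sym2 (Vtx d) → Ω → Bool) (n : ℕ) (x y : Vtx d) (ω : Ω) :
    (percGraph edge ω).edist x y ≤ (n : ℕ∞) ↔ reachIn edge n x y ω := by
  rw [reachIn_iff_exists_walk]
  constructor
  · intro h
    obtain ⟨p, hp⟩ := SimpleGraph.exists_walk_of_edist_ne_top
      (h.trans_lt (ENat.coe_lt_top n)).ne
    refine ⟨p, ?_⟩
    have : ((p.length : ℕ∞)) ≤ (n : ℕ∞) := hp ▸ h
    exact_mod_cast this
  · rintro ⟨p, hp⟩
    exact (SimpleGraph.edist_le p).trans (by exact_mod_cast hp)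

lemma measurableSet_reachIn [MeasurableSpace Ω] (edge : Sym2 (Vtx d) → Ω → Bool)
    (hmeas : ∀ e, Measurable (edge e)) (n : ℕ) (x y : Vtx d) :
    MeasurableSet {ω : Ω | reachIn edge n x y ω} := by
  induction n generalizing x with
  | zero =>
    by_cases h : x = y
    · have : {ω : Ω | reachIn edge 0 x y ω} = Set.univ := by
        ext ω; simp [reachIn, h]
      rw [this]; exact MeasurableSet.univ
    · have : {ω : Ω | reachIn edge 0 x y ω} = ∅ := by
        ext ω; simp [reachIn, h]
      rw [this]; exact MeasurableSet.empty
  | succ n ih =>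
    have hset : {ω : Ω | reachIn edge (n+1) x y ω}
        = {ω : Ω | reachIn edge n x y ω} ∪ ⋃ z : Vtx d,
            ({ω : Ω | x ≠ z ∧ edge s(x, z) ω = true} ∩ {ω : Ω | reachIn edge n z y ω}) := by
      ext ω
      simp only [Set.mem_setOf_eq, Set.mem_union, Set.mem_iUnion, Set.mem_inter_iff]
      rfl
    rw [hset]
    refine (ih x).union (MeasurableSet.iUnion fun z => MeasurableSet.inter ?_ (ih z))
    by_cases hxz : x = z
    · have : {ω : Ω | x ≠ z ∧ edge s(x, z) ω = true} = ∅ := by ext ω; simp [hxz]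
      rw [this]; exact MeasurableSet.empty
    · have : {ω : Ω | x ≠ z ∧ edge s(x, z) ω = true} = (edge s(x, z)) ⁻¹' {true} := by
        ext ω; simp [hxz]
      rw [this]; exact (hmeas _) (measurableSet_singleton true)

lemma measurableSet_edist_le [MeasurableSpace Ω] (edge : Sym2 (Vtx d) → Ω → Bool)
    (hmeas : ∀ e, Measurable (edge e)) (n : ℕ) (x y : Vtx d) :
    MeasurableSet {ω : Ω | (percGraph edge ω).edist x y ≤ (n : ℕ∞)} := by
  simp only [edist_le_iff_reachIn]
  exact measurableSet_reachIn edge hmeas n x y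

lemma EB_eq [MeasurableSpace Ω] (μ : Measure Ω) (edge : Sym2 (Vtx d) → Ω → Bool)
    (hmeas : ∀ e, Measurable (edge e)) (k : ℕ) :
    EB μ edge k = ∑' x : Vtx d, μ {ω : Ω | (percGraph edge ω).edist 0 x ≤ (k : ℕ∞)} := by
  have h1 : ∀ ω : Ω, ((ball edge ω k).encard : ℝ≥0∞)
      = ∑' x : Vtx d, Set.indicator {ω' : Ω | (percGraph edge ω').edist 0 x ≤ (k : ℕ∞)}
          (fun _ => (1 : ℝ≥0∞)) ω := by
    intro ω
    rw [← ENNReal.tsum_set_one, tsum_subtype (ball edge ω k) (fun _ => (1 : ℝ≥0∞))]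
    refine tsum_congr fun x => ?_
    by_cases hx : x ∈ ball edge ω k
    · rw [Set.indicator_of_mem hx]
      exact (Set.indicator_of_mem (show ω ∈ {ω' : Ω | (percGraph edge ω').edist 0 x ≤ (k : ℕ∞)} from hx) (fun _ => (1 : ℝ≥0∞))).symm
    · rw [Set.indicator_of_notMem hx]
      exact (Set.indicator_of_notMem (show ω ∉ {ω' : Ω | (percGraph edge ω').edist 0 x ≤ (k : ℕ∞)} from hx) (fun _ => (1 : ℝ≥0∞))).symm
  calc EB μ edge k
      = ∫⁻ ω, ∑' x : Vtx d, Set.indicator {ω' : Ω | (percGraph edge ω').edist 0 x ≤ (k : ℕ∞)}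
          (fun _ => (1 : ℝ≥0∞)) ω ∂μ := by
        unfold EB; congr 1; ext ω; exact h1 ω
    _ = ∑' x : Vtx d, ∫⁻ ω, Set.indicator {ω' : Ω | (percGraph edge ω').edist 0 x ≤ (k : ℕ∞)}
          (fun _ => (1 : ℝ≥0∞)) ω ∂μ := by
        refine lintegral_tsum fun x => ?_
        exact (measurable_const.indicator (measurableSet_edist_le edge hmeas k 0 x)).aemeasurable
    _ = ∑' x : Vtx d, μ {ω : Ω | (percGraph edge ω).edist 0 x ≤ (k : ℕ∞)} := by
        refine tsum_congr fun x => ?_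
        rw [lintegral_indicator_const (measurableSet_edist_le edge hmeas k 0 x), one_mul]


variable {d : ℕ}

/-- sup-norm of a lattice point, as a natural number -/
def nn (x : Fin d → ℤ) : ℕ := Finset.univ.sup fun i => (x i).natAbs

lemma norm_eq_nn (x : Fin d → ℤ) : ‖x‖ = (nn x : ℝ) := by
  rw [Pi.norm_def]
  have h : (Finset.univ.sup fun i => ‖x i‖₊) = ((nn x : ℕ) : ℝ≥0) := by
    unfold nn
    rw [Finset.comp_sup_eq_sup_comp (Nat.cast : ℕ → ℝ≥0)
      (fun a b => by simp [Nat.cast_max]) (by simp)]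
    refine Finset.sup_congr rfl fun i _ => ?_
    simp [Function.comp, NNReal.natCast_natAbs]
  rw [h]
  simp

/-- the box of radius M -/
def boxF (d M : ℕ) : Finset (Fin d → ℤ) :=
  Fintype.piFinset fun _ : Fin d => Finset.Icc (-(M : ℤ)) (M : ℤ)

lemma mem_boxF {M : ℕ} {x : Fin d → ℤ} : x ∈ boxF d M ↔ nn x ≤ M := by
  unfold boxF nn
  rw [Fintype.mem_piFinset, Finset.sup_le_iff]
  constructor
  · intro h i _
    have := h i
    rw [Finset.mem_Icc] at this
    omega
  · intro h i
    have := h i (Finset.mem_univ i)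
    rw [Finset.mem_Icc]
    omega

lemma card_boxF (d M : ℕ) : (boxF d M).card = (2 * M + 1) ^ d := by
  unfold boxF
  rw [Fintype.card_piFinset]
  have : (Finset.Icc (-(M : ℤ)) (M : ℤ)).card = 2 * M + 1 := by
    rw [Int.card_Icc]
    omega
  simp [this]

lemma boxF_mono {d : ℕ} {M N : ℕ} (h : M ≤ N) : boxF d M ⊆ boxF d N := by
  intro x hx
  rw [mem_boxF] at *
  omega

/-- real pow difference bound -/
lemma pow_sub_pow_le {a b : ℝ} (hb : 0 ≤ b) (hab : b ≤ a) (n : ℕ) :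
    a ^ n - b ^ n ≤ n * (a - b) * a ^ (n - 1) := by
  induction n with
  | zero => simp
  | succ n ih =>
    have ha : 0 ≤ a := hb.trans hab
    have h1 : a ^ (n+1) - b ^ (n+1) = a * (a ^ n - b ^ n) + (a - b) * b ^ n := by ring
    have h2 : a * (a ^ n - b ^ n) ≤ a * (n * (a - b) * a ^ (n - 1)) :=
      mul_le_mul_of_nonneg_left ih ha
    have h3 : a * (n * (a - b) * a ^ (n - 1)) ≤ n * (a - b) * a ^ n := by
      rcases Nat.eq_zero_or_pos n with hn | hn
      · simp [hn]
      · have hpow : a * a ^ (n - 1) = a ^ n := by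
          rw [← pow_succ']
          congr 1
          omega
        refine le_of_eq ?_
        rw [← hpow]
        ring
    have h4 : (a - b) * b ^ n ≤ (a - b) * a ^ n :=
      mul_le_mul_of_nonneg_left (pow_le_pow_left₀ hb hab n) (by linarith)
    have h5 : (n : ℝ) * (a - b) * a ^ n + (a - b) * a ^ n = (n + 1 : ℕ) * (a - b) * a ^ n := by
      push_cast; ring
    calc a ^ (n+1) - b ^ (n+1) ≤ n * (a - b) * a ^ n + (a - b) * a ^ n := by linarith
      _ = (n + 1 : ℕ) * (a - b) * a ^ ((n + 1) - 1) := by rw [h5]; norm_num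

/-- tail sum bound: `∑_{n ≥ M} n^{-s} ≤ (M-1)^{1-s}/(s-1)` -/
lemma tail_sum_le {s : ℝ} (hs : 1 < s) {M : ℕ} (hM : 2 ≤ M) :
    ∑' n : ℕ, (if M ≤ n then ENNReal.ofReal ((n : ℝ) ^ (-s)) else 0)
      ≤ ENNReal.ofReal (((M : ℝ) - 1) ^ (1 - s) / (s - 1)) := by
  set x₀ : ℝ := (M : ℝ) - 1 with hx₀
  have hx₀1 : 1 ≤ x₀ := by
    have : (2 : ℝ) ≤ (M : ℝ) := by exact_mod_cast hM
    simp [hx₀]; linarith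
  have hx₀0 : 0 < x₀ := lt_of_lt_of_le one_pos hx₀1
  -- partial sums bound
  have key : ∀ N : ℕ, (∑ n ∈ Finset.range N, if M ≤ n then ((n : ℝ) ^ (-s)) else 0)
      ≤ x₀ ^ (1 - s) / (s - 1) := by
    intro N
    rcases le_or_gt N M with hNM | hMN
    · -- all terms zero... not exactly: terms with M ≤ n < N: none since N ≤ M
      have : (∑ n ∈ Finset.range N, if M ≤ n then ((n : ℝ) ^ (-s)) else 0) = 0 := by
        refine Finset.sum_eq_zero fun n hn => ?_
        rw [Finset.mem_range] at hn
        rw [if_neg (by omega)]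
      rw [this]
      exact div_nonneg (Real.rpow_nonneg (by linarith) _) (by linarith)
    · set a : ℕ := N - M with ha
      have hNa : N = M + a := by omega
      have hsum : (∑ n ∈ Finset.range N, if M ≤ n then ((n : ℝ) ^ (-s)) else 0)
          = ∑ i ∈ Finset.range a, ((M + i : ℕ) : ℝ) ^ (-s) := by
        rw [hNa, Finset.range_eq_Ico, ← Finset.sum_Ico_consecutive _ (Nat.zero_le M) (Nat.le_add_right M a)]
        have h0 : (∑ n ∈ Finset.Ico 0 M, if M ≤ n then ((n : ℝ) ^ (-s)) else 0) = 0 := by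
          refine Finset.sum_eq_zero fun n hn => ?_
          rw [Finset.mem_Ico] at hn
          rw [if_neg (by omega)]
        have h1 : (∑ n ∈ Finset.Ico M (M + a), if M ≤ n then ((n : ℝ) ^ (-s)) else 0)
            = ∑ n ∈ Finset.Ico M (M + a), ((n : ℝ) ^ (-s)) := by
          refine Finset.sum_congr rfl fun n hn => ?_
          rw [Finset.mem_Ico] at hn
          rw [if_pos hn.1]
        rw [h0, h1, zero_add, Finset.sum_Ico_eq_sum_range]
        simp
      rw [hsum]
      have hanti : AntitoneOn (fun x : ℝ => x ^ (-s)) (Set.Icc x₀ (x₀ + a)) := by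
        intro u hu v hv huv
        have hu0 : 0 < u := lt_of_lt_of_le hx₀0 hu.1
        simp only
        rw [Real.rpow_neg (le_of_lt hu0), Real.rpow_neg (by linarith : (0:ℝ) ≤ v)]
        exact inv_anti₀ (Real.rpow_pos_of_pos hu0 s)
          (Real.rpow_le_rpow (le_of_lt hu0) huv (by linarith))
      have hint := hanti.sum_le_integral
      have heq : ∀ i ∈ Finset.range a, ((M + i : ℕ) : ℝ) ^ (-s) = (fun x : ℝ => x ^ (-s)) (x₀ + (i + 1 : ℕ)) := by
        intro i _
        congr 1
        push_cast [hx₀]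
        ring
      rw [Finset.sum_congr rfl heq]
      refine hint.trans ?_
      have hival : ∫ x in x₀..(x₀ + a), x ^ (-s) = ((x₀ + a) ^ (-s + 1) - x₀ ^ (-s + 1)) / (-s + 1) := by
        apply integral_rpow
        right
        constructor
        · intro h; linarith
        · intro h
          rw [Set.mem_uIcc] at h
          rcases h with ⟨h1, _⟩ | ⟨_, h2⟩ <;> [linarith; linarith]
      rw [hival]
      have hs1 : -s + 1 < 0 := by linarith
      have h2 : ((x₀ + a) ^ (-s + 1) - x₀ ^ (-s + 1)) / (-s + 1)
          = (x₀ ^ (-s + 1) - (x₀ + a) ^ (-s + 1)) / (s - 1) := by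
        rw [div_eq_div_iff (by linarith) (by linarith)]
        ring
      rw [h2]
      have h3 : (0:ℝ) ≤ (x₀ + a) ^ (-s + 1) := Real.rpow_nonneg (by positivity) _
      have h4 : (1 : ℝ) - s = -s + 1 := by ring
      rw [h4]
      apply div_le_div_of_nonneg_right _ (by linarith)
      · linarith
  -- pass to tsum
  rw [ENNReal.tsum_eq_iSup_sum]
  refine iSup_le fun F => ?_
  obtain ⟨N, hN⟩ := F.exists_nat_subset_range
  calc (∑ n ∈ F, if M ≤ n then ENNReal.ofReal ((n : ℝ) ^ (-s)) else 0)
      ≤ ∑ n ∈ Finset.range N, if M ≤ n then ENNReal.ofReal ((n : ℝ) ^ (-s)) else 0 := by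
        refine Finset.sum_le_sum_of_subset hN
    _ = ENNReal.ofReal (∑ n ∈ Finset.range N, if M ≤ n then ((n : ℝ) ^ (-s)) else 0) := by
        rw [ENNReal.ofReal_sum_of_nonneg]
        · refine Finset.sum_congr rfl fun n _ => ?_
          split_ifs <;> simp
        · intro n _
          split_ifs
          · positivity
          · exact le_rfl
    _ ≤ ENNReal.ofReal (x₀ ^ (1 - s) / (s - 1)) := ENNReal.ofReal_le_ofReal (key N)

end Stmt16Aux


/-- In the setting of Theorem `nonexpothm` (`λ(r) = r^(-β) L(r)`, `β > d`,
`λ(r) ≤ α r^(-β'')` for `r ≥ 1`, `d < β' < β'' < min(2d, β)`), if `c > 0` is a constant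
for which `P(D(0,x) ≤ n) ≤ K(n)^{β'} ‖x‖^{-β'}` holds whenever `‖x‖ > K(n)`, where
`γ = log(2d/β')/log 2` and `K(n) = exp(c n^γ) + 1`, then there is a finite constant `C`
with `E|B_k| ≤ C K(k)^d` for all `k`, and consequently `limsup (E|B_k|)^{1/k} = 1`. -/
theorem stmt16 {d : ℕ} {Ω : Type*} [MeasurableSpace Ω] (μ : Measure Ω)
    (edge : Sym2 (Vtx d) → Ω → Bool) (L : ℝ → ℝ) (β : ℝ)
    (hβ : (d : ℝ) < β) (hL : SlowlyVarying L)
    (hmodel : IsLRPModel d μ edge (fun r => r ^ (-β) * L r))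
    (hmono : ∀ r s : ℝ, 0 < r → r ≤ s → s ^ (-β) * L s ≤ r ^ (-β) * L r)
    (hperc : 0 < μ (percEvent edge))
    (α β' β'' : ℝ) (hα : 0 < α)
    (h1 : (d : ℝ) < β') (h2 : β' < β'') (h3 : β'' < min (2 * (d : ℝ)) β)
    (hub : ∀ r : ℝ, 1 ≤ r → r ^ (-β) * L r ≤ α * r ^ (-β''))
    (c : ℝ) (hc : 0 < c)
    (hbound : ∀ (n : ℕ) (x : Vtx d),
        Real.exp (c * (n : ℝ) ^ (Real.log (2 * (d : ℝ) / β') / Real.log 2)) + 1 < ‖x‖ →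
        μ {ω | (percGraph edge ω).edist 0 x ≤ (n : ℕ∞)} ≤
          ENNReal.ofReal
            ((Real.exp (c * (n : ℝ) ^ (Real.log (2 * (d : ℝ) / β') / Real.log 2)) + 1) ^ β'
              * ‖x‖ ^ (-β'))) :
    (∃ C : ℝ≥0∞, C < ⊤ ∧ ∀ k : ℕ,
        EB μ edge k ≤ C * ENNReal.ofReal
          ((Real.exp (c * (k : ℝ) ^ (Real.log (2 * (d : ℝ) / β') / Real.log 2)) + 1) ^ d)) ∧
    atTop.limsup (fun k : ℕ => EB μ edge k ^ (1 / (k : ℝ))) = 1 := by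
  classical
  haveI := hmodel.prob
  have hd : 0 < d := hmodel.d_pos
  have hd1 : (1 : ℝ) ≤ (d : ℝ) := by exact_mod_cast hd
  set γ : ℝ := Real.log (2 * (d : ℝ) / β') / Real.log 2 with hγdef
  set Kf : ℕ → ℝ := fun k => Real.exp (c * (k : ℝ) ^ γ) + 1 with hKfdef
  have hβ'0 : 0 < β' := lt_trans (by linarith) h1
  have hK2 : ∀ k : ℕ, 2 ≤ Kf k := by
    intro k
    have h1' : (1 : ℝ) ≤ Real.exp (c * (k : ℝ) ^ γ) :=
      Real.one_le_exp (mul_nonneg hc.le (Real.rpow_nonneg (Nat.cast_nonneg k) γ))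
    simp only [hKfdef]
    linarith
  have hKpos : ∀ k : ℕ, 0 < Kf k := fun k => lt_of_lt_of_le two_pos (hK2 k)
  set s : ℝ := β' - ((d : ℝ) - 1) with hsdef
  have hs : 1 < s := by simp only [hsdef]; linarith
  set A : ℝ := 2 * (d : ℝ) * 3 ^ (d - 1) with hAdef
  have hA0 : 0 < A := by
    simp only [hAdef]
    positivity
  set C₀ : ℝ := 3 ^ d + A * ((2 : ℝ) ^ (s - 1) / (s - 1)) with hC₀def
  have hC₀ : 0 < C₀ := by
    have : (0:ℝ) < (2 : ℝ) ^ (s - 1) := Real.rpow_pos_of_pos two_pos _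
    have h3 : (0:ℝ) < 3 ^ d := by positivity
    have : 0 ≤ A * ((2 : ℝ) ^ (s - 1) / (s - 1)) := by
      apply mul_nonneg hA0.le
      apply div_nonneg this.le
      linarith
    rw [hC₀def]
    linarith
  -- the central estimate
  have hEB : ∀ k : ℕ, EB μ edge k ≤ ENNReal.ofReal (C₀ * Kf k ^ d) := by
    intro k
    rw [Stmt16Aux.EB_eq μ edge hmodel.meas k]
    set K : ℝ := Kf k with hKdef
    have hK0 : (0:ℝ) < K := hKpos k
    have hK2' : (2:ℝ) ≤ K := hK2 k
    have hKeq : K = Real.exp (c * (k:ℝ) ^ γ) + 1 := rfl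
    clear_value K
    set M : ℕ := ⌊K⌋₊ + 1 with hMdef
    have hfloor2 : 2 ≤ ⌊K⌋₊ := Nat.le_floor (by exact_mod_cast hK2')
    have hM2 : 2 ≤ M := by omega
    have hfl1 : K - 1 ≤ (⌊K⌋₊:ℝ) := by
      have := Nat.lt_floor_add_one K
      linarith
    have hfl2 : K / 2 ≤ (⌊K⌋₊:ℝ) := by linarith
    have hcondiff : ∀ n : ℕ, (K < (n:ℝ)) ↔ M ≤ n := by
      intro n
      rw [hMdef, Nat.add_one_le_iff, ← Nat.floor_lt hK0.le]
    have hpt : ∀ x : Vtx d, μ {ω : Ω | (percGraph edge ω).edist 0 x ≤ (k : ℕ∞)}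
        ≤ Set.indicator (↑(Stmt16Aux.boxF d ⌊K⌋₊) : Set (Vtx d)) (fun _ => (1:ℝ≥0∞)) x
          + (if K < (Stmt16Aux.nn x : ℝ) then
              ENNReal.ofReal (K ^ β' * ((Stmt16Aux.nn x : ℝ)) ^ (-β')) else 0) := by
      intro x
      by_cases hx : K < (Stmt16Aux.nn x : ℝ)
      · rw [if_pos hx]
        refine le_add_left ?_
        have hb := hbound k x (by rw [Stmt16Aux.norm_eq_nn, ← hKeq]; exact hx)
        rwa [Stmt16Aux.norm_eq_nn, ← hKeq] at hb
      · rw [if_neg hx]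
        push_neg at hx
        have hmem : x ∈ Stmt16Aux.boxF d ⌊K⌋₊ :=
          Stmt16Aux.mem_boxF.mpr (Nat.le_floor hx)
        rw [Set.indicator_of_mem (by exact_mod_cast hmem : x ∈ (↑(Stmt16Aux.boxF d ⌊K⌋₊) : Set (Vtx d)))]
        exact le_add_right prob_le_one
    have hpartA : (∑' x : Vtx d,
          Set.indicator (↑(Stmt16Aux.boxF d ⌊K⌋₊) : Set (Vtx d)) (fun _ => (1:ℝ≥0∞)) x)
        ≤ ENNReal.ofReal ((3:ℝ)^d * K ^ d) := by
      calc (∑' x : Vtx d, Set.indicator (↑(Stmt16Aux.boxF d ⌊K⌋₊) : Set (Vtx d)) (fun _ => (1:ℝ≥0∞)) x)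
          = (((Stmt16Aux.boxF d ⌊K⌋₊).card : ℕ) : ℝ≥0∞) := by
            rw [← tsum_subtype (↑(Stmt16Aux.boxF d ⌊K⌋₊) : Set (Vtx d)) (fun _ => (1:ℝ≥0∞)),
              ENNReal.tsum_set_one, Set.encard_coe_eq_coe_finsetCard, ENat.toENNReal_coe]
        _ ≤ ENNReal.ofReal ((3:ℝ)^d * K ^ d) := by
            rw [← ENNReal.ofReal_natCast]
            apply ENNReal.ofReal_le_ofReal
            rw [Stmt16Aux.card_boxF]
            push_cast
            calc ((2*(⌊K⌋₊:ℝ)+1))^d ≤ (3*K)^d := by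
                  apply pow_le_pow_left₀ (by positivity)
                  have := Nat.floor_le hK0.le
                  linarith
              _ = 3^d * K^d := mul_pow 3 K d
    have hstep1 : (∑' x : Vtx d, (if K < (Stmt16Aux.nn x : ℝ) then
            ENNReal.ofReal (K ^ β' * ((Stmt16Aux.nn x : ℝ)) ^ (-β')) else 0))
        = ∑' n : ℕ, ∑' x : Vtx d, (if n = Stmt16Aux.nn x then
            (if K < (n : ℝ) then ENNReal.ofReal (K ^ β' * ((n : ℝ)) ^ (-β')) else 0) else 0) := by
      have hx1 : ∀ x : Vtx d, (if K < (Stmt16Aux.nn x : ℝ) then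
            ENNReal.ofReal (K ^ β' * ((Stmt16Aux.nn x : ℝ)) ^ (-β')) else 0)
          = ∑' n : ℕ, (if n = Stmt16Aux.nn x then
            (if K < (n : ℝ) then ENNReal.ofReal (K ^ β' * ((n : ℝ)) ^ (-β')) else 0) else 0) := by
        intro x
        rw [tsum_eq_single (Stmt16Aux.nn x) (fun n hn => if_neg hn), if_pos rfl]
      rw [tsum_congr hx1]
      exact ENNReal.tsum_comm
    have hinner : ∀ n : ℕ, (∑' x : Vtx d, (if n = Stmt16Aux.nn x then
            (if K < (n : ℝ) then ENNReal.ofReal (K ^ β' * ((n : ℝ)) ^ (-β')) else 0) else 0))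
        ≤ (((Stmt16Aux.boxF d n \ Stmt16Aux.boxF d (n-1)).card : ℕ) : ℝ≥0∞)
            * (if K < (n : ℝ) then ENNReal.ofReal (K ^ β' * ((n : ℝ)) ^ (-β')) else 0) := by
      intro n
      by_cases hn : K < (n : ℝ)
      · have hn1 : 1 ≤ n := by
          by_contra hcon
          push_neg at hcon
          interval_cases n
          · simp at hn; linarith
        calc (∑' x : Vtx d, (if n = Stmt16Aux.nn x then
                (if K < (n : ℝ) then ENNReal.ofReal (K ^ β' * ((n : ℝ)) ^ (-β')) else 0) else 0))
            ≤ ∑' x : Vtx d, Set.indicator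
                (↑(Stmt16Aux.boxF d n \ Stmt16Aux.boxF d (n-1)) : Set (Vtx d))
                (fun _ => (if K < (n : ℝ) then ENNReal.ofReal (K ^ β' * ((n : ℝ)) ^ (-β')) else 0)) x := by
              refine ENNReal.tsum_le_tsum fun x => ?_
              by_cases hx : n = Stmt16Aux.nn x
              · rw [if_pos hx]
                have hmem : x ∈ Stmt16Aux.boxF d n \ Stmt16Aux.boxF d (n-1) := by
                  rw [Finset.mem_sdiff, Stmt16Aux.mem_boxF, Stmt16Aux.mem_boxF]
                  omega
                rw [Set.indicator_of_mem (by exact_mod_cast hmem :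
                  x ∈ (↑(Stmt16Aux.boxF d n \ Stmt16Aux.boxF d (n-1)) : Set (Vtx d)))]
              · rw [if_neg hx]
                exact zero_le
          _ = (((Stmt16Aux.boxF d n \ Stmt16Aux.boxF d (n-1)).card : ℕ) : ℝ≥0∞)
              * (if K < (n : ℝ) then ENNReal.ofReal (K ^ β' * ((n : ℝ)) ^ (-β')) else 0) := by
              rw [← tsum_subtype, ENNReal.tsum_set_const,
                Set.encard_coe_eq_coe_finsetCard, ENat.toENNReal_coe]
      · have hHn : (if K < (n : ℝ) then ENNReal.ofReal (K ^ β' * ((n : ℝ)) ^ (-β')) else 0) = 0 :=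
          if_neg hn
        rw [hHn, mul_zero]
        simp
    have hterm : ∀ n : ℕ, (((Stmt16Aux.boxF d n \ Stmt16Aux.boxF d (n-1)).card : ℕ) : ℝ≥0∞)
            * (if K < (n : ℝ) then ENNReal.ofReal (K ^ β' * ((n : ℝ)) ^ (-β')) else 0)
        ≤ (if M ≤ n then ENNReal.ofReal (A * K ^ β') * ENNReal.ofReal ((n:ℝ) ^ (-s)) else 0) := by
      intro n
      by_cases hn : K < (n:ℝ)
      · rw [if_pos hn, if_pos ((hcondiff n).mp hn)]
        have hn3 : 3 ≤ n := by
          have h2n : (2:ℝ) < (n:ℝ) := lt_of_le_of_lt hK2' hn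
          have : 2 < n := by exact_mod_cast h2n
          omega
        have hnR : (0:ℝ) < (n:ℝ) := by
          have : 0 < n := by omega
          exact_mod_cast this
        have hcast1 : ((n - 1 : ℕ) : ℝ) = (n:ℝ) - 1 := by
          have h1n : 1 ≤ n := by omega
          push_cast [h1n]
          ring
        have hcard : (((Stmt16Aux.boxF d n \ Stmt16Aux.boxF d (n-1)).card : ℕ) : ℝ)
            ≤ A * (n:ℝ) ^ (d-1) := by
          rw [Finset.card_sdiff_of_subset (Stmt16Aux.boxF_mono (Nat.sub_le n 1)),
            Stmt16Aux.card_boxF, Stmt16Aux.card_boxF]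
          have hle : (2*(n-1)+1)^d ≤ (2*n+1)^d := Nat.pow_le_pow_left (by omega) d
          rw [Nat.cast_sub hle]
          push_cast [hcast1]
          have hb1 : (0:ℝ) ≤ 2*((n:ℝ)-1)+1 := by
            have : (3:ℝ) ≤ (n:ℝ) := by exact_mod_cast hn3
            linarith
          have hb2 : 2*((n:ℝ)-1)+1 ≤ 2*(n:ℝ)+1 := by linarith
          calc (2*(n:ℝ)+1)^d - (2*((n:ℝ)-1)+1)^d
              ≤ (d:ℝ) * ((2*(n:ℝ)+1) - (2*((n:ℝ)-1)+1)) * (2*(n:ℝ)+1)^(d-1) :=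
                Stmt16Aux.pow_sub_pow_le hb1 hb2 d
            _ = 2*(d:ℝ) * (2*(n:ℝ)+1)^(d-1) := by ring
            _ ≤ 2*(d:ℝ) * (3*(n:ℝ))^(d-1) := by
                apply mul_le_mul_of_nonneg_left _ (by positivity)
                apply pow_le_pow_left₀ (by linarith)
                have : (3:ℝ) ≤ (n:ℝ) := by exact_mod_cast hn3
                linarith
            _ = A * (n:ℝ) ^ (d-1) := by
                rw [hAdef, mul_pow]
                ring
        have hrpow : ((n:ℝ))^(d-1) * ((n:ℝ))^(-β') = ((n:ℝ)) ^ (-s) := by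
          rw [← Real.rpow_natCast (n:ℝ) (d-1), ← Real.rpow_add hnR]
          congr 1
          rw [hsdef]
          rw [Nat.cast_sub hd]
          push_cast
          ring
        calc (((Stmt16Aux.boxF d n \ Stmt16Aux.boxF d (n-1)).card : ℕ) : ℝ≥0∞)
              * ENNReal.ofReal (K ^ β' * ((n : ℝ)) ^ (-β'))
            = ENNReal.ofReal ((((Stmt16Aux.boxF d n \ Stmt16Aux.boxF d (n-1)).card : ℕ) : ℝ))
              * ENNReal.ofReal (K ^ β' * ((n : ℝ)) ^ (-β')) := by
              rw [ENNReal.ofReal_natCast]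
          _ ≤ ENNReal.ofReal (A * (n:ℝ) ^ (d-1))
              * ENNReal.ofReal (K ^ β' * ((n : ℝ)) ^ (-β')) := by
              apply mul_le_mul_left
              exact ENNReal.ofReal_le_ofReal hcard
          _ = ENNReal.ofReal (A * K ^ β') * ENNReal.ofReal ((n:ℝ) ^ (-s)) := by
              rw [← ENNReal.ofReal_mul (by positivity), ← ENNReal.ofReal_mul (by positivity)]
              congr 1
              rw [← hrpow]
              ring
      · rw [if_neg hn, if_neg (fun h => hn ((hcondiff n).mpr h)), mul_zero]
    have hpartB : (∑' x : Vtx d, (if K < (Stmt16Aux.nn x : ℝ) then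
            ENNReal.ofReal (K ^ β' * ((Stmt16Aux.nn x : ℝ)) ^ (-β')) else 0))
        ≤ ENNReal.ofReal ((A * ((2:ℝ)^(s-1)/(s-1))) * K ^ d) := by
      rw [hstep1]
      calc (∑' n : ℕ, ∑' x : Vtx d, (if n = Stmt16Aux.nn x then
              (if K < (n : ℝ) then ENNReal.ofReal (K ^ β' * ((n : ℝ)) ^ (-β')) else 0) else 0))
          ≤ ∑' n : ℕ, (if M ≤ n then
              ENNReal.ofReal (A * K ^ β') * ENNReal.ofReal ((n:ℝ) ^ (-s)) else 0) :=
            ENNReal.tsum_le_tsum (fun n => le_trans (hinner n) (hterm n))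
        _ = ENNReal.ofReal (A * K ^ β')
            * ∑' n : ℕ, (if M ≤ n then ENNReal.ofReal ((n:ℝ) ^ (-s)) else 0) := by
            rw [← ENNReal.tsum_mul_left]
            refine tsum_congr fun n => ?_
            split_ifs <;> simp
        _ ≤ ENNReal.ofReal (A * K ^ β') * ENNReal.ofReal (((M : ℝ) - 1) ^ (1-s) / (s-1)) := by
            exact mul_le_mul_right (Stmt16Aux.tail_sum_le hs hM2) _
        _ ≤ ENNReal.ofReal ((A * ((2:ℝ)^(s-1)/(s-1))) * K ^ d) := by
            rw [← ENNReal.ofReal_mul (by positivity)]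
            apply ENNReal.ofReal_le_ofReal
            have he1 : ((M:ℝ) - 1) = (⌊K⌋₊ : ℝ) := by
              rw [hMdef]
              push_cast
              ring
            have hMK : K / 2 ≤ (M:ℝ) - 1 := by
              rw [he1]
              exact hfl2
            have hK20' : (0:ℝ) < K/2 := by positivity
            have hM1 : (0:ℝ) < (M:ℝ) - 1 := lt_of_lt_of_le hK20' hMK
            have hK20 : (0:ℝ) < K/2 := hK20'
            have hanti2 : ((M:ℝ)-1) ^ (1-s) ≤ (K/2) ^ (1-s) := by
              rw [show (1-s) = -(s-1) by ring, Real.rpow_neg hK20.le, Real.rpow_neg hM1.le]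
              exact inv_anti₀ (Real.rpow_pos_of_pos hK20 _)
                (Real.rpow_le_rpow hK20.le hMK (by linarith))
            have hKd : (K/2) ^ (1-s) * K ^ β' = 2^(s-1) * K ^ d := by
              rw [Real.div_rpow hK0.le (by norm_num : (0:ℝ) ≤ 2), div_mul_eq_mul_div,
                ← Real.rpow_add hK0]
              have he3 : (1 - s + β') = (d:ℝ) := by
                rw [hsdef]
                ring
              rw [he3, Real.rpow_natCast]
              rw [show (2:ℝ)^(1-s) = ((2:ℝ)^(s-1))⁻¹ by
                rw [← Real.rpow_neg (by norm_num : (0:ℝ) ≤ 2)]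
                norm_num]
              field_simp
            have hmul : K ^ β' * (((M:ℝ)-1) ^ (1-s)) ≤ 2^(s-1) * K ^ d := by
              calc K ^ β' * (((M:ℝ)-1) ^ (1-s)) ≤ K ^ β' * ((K/2) ^ (1-s)) :=
                    mul_le_mul_of_nonneg_left hanti2 (Real.rpow_nonneg hK0.le _)
                _ = 2^(s-1) * K ^ d := by rw [mul_comm]; exact hKd
            calc A * K ^ β' * (((M:ℝ)-1) ^ (1-s) / (s-1))
                = (K ^ β' * (((M:ℝ)-1) ^ (1-s))) * (A / (s-1)) := by ring
              _ ≤ (2^(s-1) * K ^ d) * (A / (s-1)) :=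
                  mul_le_mul_of_nonneg_right hmul (div_nonneg hA0.le (by linarith))
              _ = A * ((2:ℝ)^(s-1)/(s-1)) * K ^ d := by ring
    calc (∑' x : Vtx d, μ {ω : Ω | (percGraph edge ω).edist 0 x ≤ (k : ℕ∞)})
        ≤ ∑' x : Vtx d, (Set.indicator (↑(Stmt16Aux.boxF d ⌊K⌋₊) : Set (Vtx d)) (fun _ => (1:ℝ≥0∞)) x
          + (if K < (Stmt16Aux.nn x : ℝ) then
              ENNReal.ofReal (K ^ β' * ((Stmt16Aux.nn x : ℝ)) ^ (-β')) else 0)) :=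
          ENNReal.tsum_le_tsum hpt
      _ = (∑' x : Vtx d, Set.indicator (↑(Stmt16Aux.boxF d ⌊K⌋₊) : Set (Vtx d)) (fun _ => (1:ℝ≥0∞)) x)
          + ∑' x : Vtx d, (if K < (Stmt16Aux.nn x : ℝ) then
              ENNReal.ofReal (K ^ β' * ((Stmt16Aux.nn x : ℝ)) ^ (-β')) else 0) := ENNReal.tsum_add
      _ ≤ ENNReal.ofReal ((3:ℝ)^d * K ^ d) + ENNReal.ofReal ((A * ((2:ℝ)^(s-1)/(s-1))) * K ^ d) :=
          add_le_add hpartA hpartB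
      _ = ENNReal.ofReal (C₀ * K ^ d) := by
          rw [← ENNReal.ofReal_add (by positivity) (mul_nonneg (mul_nonneg hA0.le
            (div_nonneg (Real.rpow_nonneg (by norm_num) _) (by linarith))) (pow_nonneg hK0.le d)),
            hC₀def]
          congr 1
          ring

  constructor
  · refine ⟨ENNReal.ofReal C₀, ENNReal.ofReal_lt_top, fun k => ?_⟩
    calc EB μ edge k ≤ ENNReal.ofReal (C₀ * Kf k ^ d) := hEB k
      _ = ENNReal.ofReal C₀ * ENNReal.ofReal (Kf k ^ d) := ENNReal.ofReal_mul hC₀.le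
  · -- limsup part
    have hγlt : γ < 1 := by
      rw [hγdef, div_lt_one (Real.log_pos one_lt_two)]
      apply Real.log_lt_log
      · positivity
      · rw [div_lt_iff₀ hβ'0]
        linarith
    have hlow : ∀ k : ℕ, (1:ℝ≥0∞) ≤ EB μ edge k := by
      intro k
      have h0 : ∀ ω : Ω, (1:ℝ≥0∞) ≤ ((ball edge ω k).encard : ℝ≥0∞) := by
        intro ω
        have hne : (ball edge ω k).Nonempty := ⟨0, by
          show (percGraph edge ω).edist 0 0 ≤ (k:ℕ∞)
          rw [SimpleGraph.edist_self]
          exact zero_le⟩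
        have h1' := Set.one_le_encard_iff_nonempty.mpr hne
        exact_mod_cast h1'
      calc (1:ℝ≥0∞) = ∫⁻ _, 1 ∂μ := by rw [lintegral_one, measure_univ]
        _ ≤ EB μ edge k := lintegral_mono h0
    have hfk : ∀ k : ℕ, (1:ℝ≥0∞) ≤ EB μ edge k ^ (1/(k:ℝ)) := by
      intro k
      calc (1:ℝ≥0∞) = (1:ℝ≥0∞) ^ (1/(k:ℝ)) := (ENNReal.one_rpow _).symm
        _ ≤ EB μ edge k ^ (1/(k:ℝ)) := ENNReal.rpow_le_rpow (hlow k) (by positivity)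
    have hCK0 : ∀ k : ℕ, (0:ℝ) < C₀ * Kf k ^ d := fun k =>
      mul_pos hC₀ (pow_pos (hKpos k) d)
    have hfu : ∀ k : ℕ, EB μ edge k ^ (1/(k:ℝ))
        ≤ ENNReal.ofReal ((C₀ * Kf k ^ d) ^ (1/(k:ℝ))) := by
      intro k
      calc EB μ edge k ^ (1/(k:ℝ))
          ≤ (ENNReal.ofReal (C₀ * Kf k ^ d)) ^ (1/(k:ℝ)) :=
            ENNReal.rpow_le_rpow (hEB k) (by positivity)
        _ = ENNReal.ofReal ((C₀ * Kf k ^ d) ^ (1/(k:ℝ))) :=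
            ENNReal.ofReal_rpow_of_pos (hCK0 k)
    have hlogKf : ∀ k : ℕ, 0 ≤ Real.log (Kf k) ∧
        Real.log (Kf k) ≤ c * (k:ℝ) ^ γ + Real.log 2 := by
      intro k
      constructor
      · apply Real.log_nonneg
        linarith [hK2 k]
      · have ha : 0 ≤ c * (k:ℝ) ^ γ := mul_nonneg hc.le (Real.rpow_nonneg (Nat.cast_nonneg k) γ)
        have h1' : Kf k ≤ 2 * Real.exp (c * (k:ℝ) ^ γ) := by
          have := Real.one_le_exp ha
          simp only [hKfdef]
          linarith
        calc Real.log (Kf k) ≤ Real.log (2 * Real.exp (c * (k:ℝ) ^ γ)) :=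
              Real.log_le_log (hKpos k) h1'
          _ = Real.log 2 + (c * (k:ℝ) ^ γ) := by
              rw [Real.log_mul (by norm_num) (Real.exp_ne_zero _), Real.log_exp]
          _ = c * (k:ℝ) ^ γ + Real.log 2 := by ring
    have hgbound : ∀ k : ℕ, |Real.log (C₀ * Kf k ^ d) * (1/(k:ℝ))|
        ≤ (|Real.log C₀| + (d:ℝ) * (c * (k:ℝ) ^ γ + Real.log 2)) * (1/(k:ℝ)) := by
      intro k
      have hkinv : (0:ℝ) ≤ 1/(k:ℝ) := by positivity
      rw [abs_mul, abs_of_nonneg hkinv]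
      apply mul_le_mul_of_nonneg_right _ hkinv
      rw [Real.log_mul (ne_of_gt hC₀) (ne_of_gt (pow_pos (hKpos k) d)), Real.log_pow]
      have h2' := hlogKf k
      calc |Real.log C₀ + (d:ℕ) * Real.log (Kf k)|
          ≤ |Real.log C₀| + |(d:ℕ) * Real.log (Kf k)| := abs_add_le _ _
        _ ≤ |Real.log C₀| + (d:ℝ) * (c * (k:ℝ) ^ γ + Real.log 2) := by
            rw [abs_mul, Nat.abs_cast, abs_of_nonneg h2'.1]
            have := mul_le_mul_of_nonneg_left h2'.2 (Nat.cast_nonneg d : (0:ℝ) ≤ (d:ℝ))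
            linarith
    have hwtend : Tendsto (fun k : ℕ =>
        (|Real.log C₀| + (d:ℝ) * (c * (k:ℝ) ^ γ + Real.log 2)) * (1/(k:ℝ))) atTop (nhds 0) := by
      have l1 : Tendsto (fun k : ℕ => (k:ℝ)⁻¹) atTop (nhds 0) :=
        tendsto_inv_atTop_nhds_zero_nat
      have l2 : Tendsto (fun k : ℕ => (k:ℝ) ^ (γ-1)) atTop (nhds 0) := by
        have h := (tendsto_rpow_neg_atTop (by linarith : 0 < 1-γ)).comp
          (tendsto_natCast_atTop_atTop (R := ℝ))
        simp only [Function.comp_def, neg_sub] at h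
        exact h
      have t1 : Tendsto (fun k : ℕ =>
          (|Real.log C₀| + (d:ℝ) * Real.log 2) * (k:ℝ)⁻¹ + ((d:ℝ) * c) * (k:ℝ) ^ (γ-1))
          atTop (nhds 0) := by
        have := (l1.const_mul ((|Real.log C₀| + (d:ℝ) * Real.log 2))).add
          (l2.const_mul ((d:ℝ) * c))
        simpa using this
      refine t1.congr' ?_
      filter_upwards [Filter.eventually_ge_atTop 1] with k hk
      have hkR : (0:ℝ) < (k:ℝ) := by exact_mod_cast hk
      have hsp : (k:ℝ) ^ γ * (k:ℝ)⁻¹ = (k:ℝ) ^ (γ-1) := by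
        rw [← Real.rpow_neg_one (k:ℝ), ← Real.rpow_add hkR]
        congr 1
      rw [one_div, ← hsp]
      ring
    have hgtend : Tendsto (fun k : ℕ => Real.log (C₀ * Kf k ^ d) * (1/(k:ℝ))) atTop (nhds 0) :=
      squeeze_zero_norm (fun k => by rw [Real.norm_eq_abs]; exact hgbound k) hwtend
    have hvtend : Tendsto (fun k : ℕ => (C₀ * Kf k ^ d) ^ (1/(k:ℝ))) atTop (nhds 1) := by
      have hexp : Tendsto (fun k : ℕ => Real.exp (Real.log (C₀ * Kf k ^ d) * (1/(k:ℝ))))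
          atTop (nhds 1) := by
        have := (Real.continuous_exp.tendsto 0).comp hgtend
        simpa [Function.comp_def] using this
      apply hexp.congr
      intro k
      exact (Real.rpow_def_of_pos (hCK0 k) _).symm
    have hutend : Tendsto (fun k : ℕ => ENNReal.ofReal ((C₀ * Kf k ^ d) ^ (1/(k:ℝ))))
        atTop (nhds 1) := by
      have := (ENNReal.continuous_ofReal.tendsto 1).comp hvtend
      simpa [Function.comp_def] using this
    apply le_antisymm
    · calc atTop.limsup (fun k : ℕ => EB μ edge k ^ (1/(k:ℝ)))
          ≤ atTop.limsup (fun k : ℕ => ENNReal.ofReal ((C₀ * Kf k ^ d) ^ (1/(k:ℝ)))) :=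
            Filter.limsup_le_limsup (Filter.Eventually.of_forall hfu)
        _ = 1 := hutend.limsup_eq
    · exact Filter.le_limsup_of_frequently_le (Filter.Frequently.of_forall hfk)
end
end

section
/- Consider long-range percolation on ℤ^d. Let d < β' < 2d, let j ∈ ℕ, and let K(j) ≥ 2 be such that P(D(0,x) ≤ j) ≤ (K(j))^{β'} ‖x‖^{−β'} for all x ∈ ℤ^d with ‖x‖ > K(j). Then E(|B_j|) ≤ 5^d (1 + d/(β' − d)) (K(j))^d. -/
open MeasureTheory ProbabilityTheory Filter Set
open scoped ENNReal NNReal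

noncomputable section

/-! ### Auxiliary lemmas for `stmt17` -/

namespace LRP17

open LongRangePercolation

variable {d : ℕ} {Ω : Type*}

lemma measurable_adj [MeasurableSpace Ω] (edge : Sym2 (Vtx d) → Ω → Bool)
    (hmeas : ∀ e, Measurable (edge e)) (a b : Vtx d) :
    MeasurableSet {ω | (percGraph edge ω).Adj a b} := by
  by_cases hab : a = b
  · have : {ω | (percGraph edge ω).Adj a b} = ∅ := by
      ext ω; simp [percGraph, hab]
    rw [this]; exact MeasurableSet.empty
  · have : {ω | (percGraph edge ω).Adj a b} = edge s(a, b) ⁻¹' {true} := by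
      ext ω; simp [percGraph, hab]
    rw [this]; exact hmeas _ (measurableSet_singleton true)

lemma edist_le_iff_exists (edge : Sym2 (Vtx d) → Ω → Bool) (ω : Ω) (x : Vtx d) (j : ℕ) :
    (percGraph edge ω).edist 0 x ≤ (j : ℕ∞) ↔
      ∃ f : Fin (j + 1) → Vtx d, f 0 = 0 ∧ f (Fin.last j) = x ∧
        ∀ i : Fin j, f i.castSucc = f i.succ ∨
          (percGraph edge ω).Adj (f i.castSucc) (f i.succ) := by
  constructor
  · intro h
    have hne : (percGraph edge ω).edist 0 x ≠ ⊤ :=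
      ne_top_of_le_ne_top (by simp) h
    obtain ⟨w, hw⟩ := SimpleGraph.exists_walk_of_edist_ne_top hne
    have hlen : w.length ≤ j := by
      rw [← Nat.cast_le (α := ℕ∞), hw]; exact h
    refine ⟨fun i => w.getVert (min i w.length), ?_, ?_, ?_⟩
    · simp
    · simp only [Fin.val_last, min_eq_right hlen, SimpleGraph.Walk.getVert_length]
    · intro i
      by_cases hi : (i : ℕ) < w.length
      · right
        have h1 : min (i.castSucc : ℕ) w.length = (i : ℕ) := by
          simp only [Fin.coe_castSucc]; omega
        have h2 : min (i.succ : ℕ) w.length = (i : ℕ) + 1 := by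
          simp only [Fin.val_succ]; omega
        simp only [h1, h2]
        exact w.adj_getVert_succ hi
      · left
        have h1 : min (i.castSucc : ℕ) w.length = w.length := by
          simp only [Fin.coe_castSucc]; omega
        have h2 : min (i.succ : ℕ) w.length = w.length := by
          simp only [Fin.val_succ]; omega
        simp only [h1, h2]
  · rintro ⟨f, hf0, hfl, hstep⟩
    have claim : ∀ k : ℕ, ∀ hk : k ≤ j,
        (percGraph edge ω).edist 0 (f ⟨k, by omega⟩) ≤ (k : ℕ∞) := by
      intro k
      induction k with
      | zero =>
        intro _
        have : f ⟨0, by omega⟩ = (0 : Vtx d) := hf0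
        rw [this]
        simp [SimpleGraph.edist_self]
      | succ n ih =>
        intro hk
        have hn : n ≤ j := by omega
        have hstep' := hstep ⟨n, by omega⟩
        have hlast : (percGraph edge ω).edist (f ⟨n, by omega⟩) (f ⟨n + 1, by omega⟩) ≤ 1 := by
          rcases hstep' with h | h
          · have : f ⟨n, by omega⟩ = f ⟨n+1, by omega⟩ := h
            rw [this, SimpleGraph.edist_self]; exact zero_le
          · have := SimpleGraph.edist_le (SimpleGraph.Walk.cons h SimpleGraph.Walk.nil)
            simpa using this
        calc (percGraph edge ω).edist 0 (f ⟨n + 1, by omega⟩)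
            ≤ (percGraph edge ω).edist 0 (f ⟨n, by omega⟩) +
              (percGraph edge ω).edist (f ⟨n, by omega⟩) (f ⟨n + 1, by omega⟩) :=
              SimpleGraph.edist_triangle
        _ ≤ (n : ℕ∞) + 1 := add_le_add (ih hn) hlast
        _ = ((n + 1 : ℕ) : ℕ∞) := by push_cast; ring
    have := claim j le_rfl
    have hfj : f ⟨j, by omega⟩ = x := hfl
    rwa [hfj] at this

lemma measurable_edist_le [MeasurableSpace Ω] (edge : Sym2 (Vtx d) → Ω → Bool)
    (hmeas : ∀ e, Measurable (edge e)) (x : Vtx d) (j : ℕ) :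
    MeasurableSet {ω | (percGraph edge ω).edist 0 x ≤ (j : ℕ∞)} := by
  have : {ω | (percGraph edge ω).edist 0 x ≤ (j : ℕ∞)} =
      ⋃ (f : Fin (j + 1) → Vtx d) (_ : f 0 = 0 ∧ f (Fin.last j) = x),
        ⋂ i : Fin j, ({ω | f i.castSucc = f i.succ} ∪
          {ω | (percGraph edge ω).Adj (f i.castSucc) (f i.succ)}) := by
    ext ω
    simp only [Set.mem_setOf_eq, Set.mem_iUnion, Set.mem_iInter, Set.mem_union,
      edist_le_iff_exists]
    constructor
    · rintro ⟨f, h0, hl, hs⟩; exact ⟨f, ⟨h0, hl⟩, fun i => hs i⟩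
    · rintro ⟨f, ⟨h0, hl⟩, hs⟩; exact ⟨f, h0, hl, fun i => hs i⟩
  rw [this]
  apply MeasurableSet.iUnion
  intro f
  apply MeasurableSet.iUnion
  intro _
  apply MeasurableSet.iInter
  intro i
  apply MeasurableSet.union
  · by_cases h : f i.castSucc = f i.succ
    · simp only [h, Set.setOf_true]; exact MeasurableSet.univ
    · simp only [h, Set.setOf_false]; exact MeasurableSet.empty
  · exact measurable_adj edge hmeas _ _

/-- sup-norm of a lattice point as a natural number -/
def Nx (x : Vtx d) : ℕ := Finset.univ.sup fun i => (x i).natAbs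

lemma norm_eq_Nx (x : Vtx d) : ‖x‖ = (Nx x : ℝ) := by
  rw [Pi.norm_def]
  have : (Finset.univ.sup fun b => ‖x b‖₊) = ((Nx x : ℕ) : ℝ≥0) := by
    rw [Nx]
    rw [Finset.comp_sup_eq_sup_comp (Nat.cast : ℕ → ℝ≥0) (fun a b => by
      simp [Nat.cast_max]) (by simp)]
    congr 1
    funext i
    exact (NNReal.natCast_natAbs (x i)).symm ▸ rfl
  rw [this]
  simp

def boxF (d n : ℕ) : Finset (Vtx d) := Fintype.piFinset fun _ => Finset.Icc (-(n:ℤ)) (n:ℤ)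

lemma mem_boxF {n : ℕ} {x : Vtx d} : x ∈ boxF d n ↔ Nx x ≤ n := by
  rw [boxF, Fintype.mem_piFinset, Nx]
  simp only [Finset.mem_Icc, Finset.sup_le_iff, Finset.mem_univ, forall_true_left]
  constructor <;> intro h i <;> have := h i <;> omega

lemma card_boxF (n : ℕ) : (boxF d n).card = (2 * n + 1) ^ d := by
  rw [boxF, Fintype.card_piFinset]
  have : (Finset.Icc (-(n:ℤ)) (n:ℤ)).card = 2 * n + 1 := by
    rw [Int.card_Icc]; omega
  simp [this]

lemma setOf_Nx_le (n : ℕ) : {x : Vtx d | Nx x ≤ n} = ↑(boxF d n) := by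
  ext x; simp [mem_boxF]

lemma encard_Nx_le (n : ℕ) : {x : Vtx d | Nx x ≤ n}.encard = ((2 * n + 1) ^ d : ℕ) := by
  rw [setOf_Nx_le, Set.encard_coe_eq_coe_finsetCard, card_boxF]

lemma encard_Nx_eq_le (n : ℕ) (hn : 1 ≤ n) :
    {x : Vtx d | Nx x = n}.encard ≤ (((2 * n + 1) ^ d - (2 * (n - 1) + 1) ^ d : ℕ) : ℕ∞) := by
  have hsub : {x : Vtx d | Nx x = n} = ↑(boxF d n \ boxF d (n - 1)) := by
    ext x
    simp only [Set.mem_setOf_eq, Finset.coe_sdiff, Set.mem_diff, Finset.mem_coe, mem_boxF]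
    omega
  rw [hsub, Set.encard_coe_eq_coe_finsetCard]
  rw [Finset.card_sdiff_of_subset (by intro x hx; rw [mem_boxF] at *; omega)]
  rw [card_boxF, card_boxF]

lemma key_rpow (s : ℝ) (hs : 0 < s) (b : ℝ) (hb : 2 ≤ b) :
    s * b ^ (-s - 1) ≤ (b - 1) ^ (-s) - b ^ (-s) := by
  have hb0 : (0:ℝ) < b := by linarith
  have ha0 : (0:ℝ) < b - 1 := by linarith
  set u : ℝ := (b - 1) / b with hu
  have hu0 : 0 < u := div_pos ha0 hb0
  have hu1 : 1 - u = 1 / b := by rw [hu, one_sub_div hb0.ne']; congr 1; ring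
  have hsplit : (b - 1) ^ (-s) = u ^ (-s) * b ^ (-s) := by
    rw [← Real.mul_rpow (le_of_lt hu0) (le_of_lt hb0)]
    congr 1
    rw [hu]; field_simp
  have hlog : Real.log u ≤ u - 1 := Real.log_le_sub_one_of_pos hu0
  have hber : 1 + s * (1 - u) ≤ u ^ (-s) := by
    rw [Real.rpow_def_of_pos hu0]
    have h1 : Real.log u * (-s) + 1 ≤ Real.exp (Real.log u * (-s)) :=
      Real.add_one_le_exp _
    nlinarith
  have hbs : (0:ℝ) < b ^ (-s) := Real.rpow_pos_of_pos hb0 _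
  have hpow : b ^ (-s - 1) = b ^ (-s) * b⁻¹ := by
    rw [← Real.rpow_neg_one b, ← Real.rpow_add hb0]; ring_nf
  rw [hsplit, hpow]
  have hmain : s * (1 - u) * b ^ (-s) ≤ (u ^ (-s) - 1) * b ^ (-s) := by
    apply mul_le_mul_of_nonneg_right _ (le_of_lt hbs)
    linarith
  calc s * (b ^ (-s) * b⁻¹) = s * (1 - u) * b ^ (-s) := by
        rw [hu1]; ring
  _ ≤ (u ^ (-s) - 1) * b ^ (-s) := hmain
  _ = u ^ (-s) * b ^ (-s) - b ^ (-s) := by ring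

lemma pow_sub_pow_le' (x y : ℝ) (hy : 0 ≤ y) (hxy : y ≤ x) (d : ℕ) :
    x ^ d - y ^ d ≤ d * x ^ (d - 1) * (x - y) := by
  have hx : 0 ≤ x := le_trans hy hxy
  rcases Nat.eq_zero_or_pos d with h | h
  · simp [h]
  rw [← geom_sum₂_mul, mul_assoc]
  rw [show (d:ℝ) * (x ^ (d-1) * (x - y)) = (d * x ^ (d-1)) * (x - y) by ring]
  apply mul_le_mul_of_nonneg_right _ (by linarith)
  calc ∑ i ∈ Finset.range d, x ^ i * y ^ (d - 1 - i)
      ≤ ∑ _i ∈ Finset.range d, x ^ (d - 1) := by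
        apply Finset.sum_le_sum
        intro i hi
        calc x ^ i * y ^ (d - 1 - i) ≤ x ^ i * x ^ (d - 1 - i) :=
              mul_le_mul_of_nonneg_left (pow_le_pow_left₀ hy hxy _) (pow_nonneg hx i)
        _ = x ^ (d - 1) := by
              rw [← pow_add]; congr 1
              simp only [Finset.mem_range] at hi; omega
  _ = d * x ^ (d - 1) := by
        rw [Finset.sum_const, Finset.card_range, nsmul_eq_mul]

lemma const_pow_le (d : ℕ) (hd : 1 ≤ d) :
    (2:ℝ) ^ (d + 1) * (7 / 3) ^ (d - 1) ≤ 5 ^ d := by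
  induction d with
  | zero => omega
  | succ n ih =>
    rcases Nat.eq_zero_or_pos n with h | h
    · subst h; norm_num
    · have hn : 1 ≤ n := h
      have h5 := ih hn
      have hsub : n + 1 - 1 = (n - 1) + 1 := by omega
      rw [hsub, pow_succ, pow_succ, pow_succ (5:ℝ)]
      calc (2:ℝ) ^ (n + 1) * 2 * ((7/3) ^ (n-1) * (7/3))
          = ((2:ℝ) ^ (n+1) * (7/3)^(n-1)) * (2 * (7/3)) := by ring
      _ ≤ 5 ^ n * 5 := by
          apply mul_le_mul h5 (by norm_num) (by norm_num) (by positivity)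

lemma shell_bound (d : ℕ) (hd : 1 ≤ d) (s β' Kj : ℝ) (hs : 0 < s) (hβ : β' = s + d)
    (hK : 0 < Kj) (n : ℕ) (hn : 3 ≤ n) :
    (((2*n+1)^d - (2*(n-1)+1)^d : ℕ) : ℝ) * (Kj^β' * (n:ℝ)^(-β'))
      ≤ (2*d*(7/3:ℝ)^(d-1) * Kj^β' / s) * (((n:ℝ)-1)^(-s) - (n:ℝ)^(-s)) := by
  have hn3 : (3:ℝ) ≤ (n:ℝ) := by exact_mod_cast hn
  have hn0 : (0:ℝ) < n := by linarith
  have hyx : (2*(n-1)+1 : ℕ) ≤ (2*n+1 : ℕ) := by omega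
  have hn1 : (1:ℕ) ≤ n := by omega
  set x : ℝ := 2*(n:ℝ)+1 with hxdef
  have hcast : (((2*n+1)^d - (2*(n-1)+1)^d : ℕ) : ℝ)
      = x^d - (2*(n:ℝ)-1)^d := by
    rw [Nat.cast_sub (Nat.pow_le_pow_left hyx d)]
    push_cast [Nat.cast_sub hn1]
    ring
  have hy0 : (0:ℝ) ≤ 2*(n:ℝ)-1 := by linarith
  have hyxR : 2*(n:ℝ)-1 ≤ x := by rw [hxdef]; linarith
  have hstep1 : x^d - (2*(n:ℝ)-1)^d ≤ 2*d*x^(d-1) := by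
    have h := pow_sub_pow_le' x (2*(n:ℝ)-1) hy0 hyxR d
    have h2 : x - (2*(n:ℝ)-1) = 2 := by rw [hxdef]; ring
    rw [h2] at h
    linarith
  have hx0 : (0:ℝ) ≤ x := by rw [hxdef]; linarith
  have hxn : x ≤ (7/3)*(n:ℝ) := by rw [hxdef]; linarith
  have hstep2 : x^(d-1) ≤ (7/3:ℝ)^(d-1) * (n:ℝ)^(d-1) := by
    calc x^(d-1) ≤ ((7/3)*(n:ℝ))^(d-1) := pow_le_pow_left₀ hx0 hxn _
    _ = (7/3:ℝ)^(d-1) * (n:ℝ)^(d-1) := mul_pow _ _ _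
  have hrw : (n:ℝ)^(d-1) * (n:ℝ)^(-β') = (n:ℝ)^(-s-1) := by
    rw [← Real.rpow_natCast (n:ℝ) (d-1), ← Real.rpow_add hn0]
    congr 1
    rw [Nat.cast_sub hd, hβ]
    ring
  have hkey : s * (n:ℝ)^(-s-1) ≤ ((n:ℝ)-1)^(-s) - (n:ℝ)^(-s) :=
    key_rpow s hs (n:ℝ) (by linarith)
  have hKβ : (0:ℝ) < Kj^β' := Real.rpow_pos_of_pos hK _
  have hnβ : (0:ℝ) < (n:ℝ)^(-β') := Real.rpow_pos_of_pos hn0 _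
  rw [hcast]
  have hs' : s ≠ 0 := ne_of_gt hs
  calc (x^d - (2*(n:ℝ)-1)^d) * (Kj^β' * (n:ℝ)^(-β'))
      ≤ (2*d*((7/3:ℝ)^(d-1) * (n:ℝ)^(d-1))) * (Kj^β' * (n:ℝ)^(-β')) := by
        apply mul_le_mul_of_nonneg_right _ (by positivity)
        exact le_trans hstep1 (mul_le_mul_of_nonneg_left hstep2 (by positivity))
  _ = (2*d*(7/3:ℝ)^(d-1) * Kj^β' / s) * (s * ((n:ℝ)^(d-1) * (n:ℝ)^(-β'))) := by
        field_simp
  _ = (2*d*(7/3:ℝ)^(d-1) * Kj^β' / s) * (s * (n:ℝ)^(-s-1)) := by rw [hrw]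
  _ ≤ (2*d*(7/3:ℝ)^(d-1) * Kj^β' / s) * (((n:ℝ)-1)^(-s) - (n:ℝ)^(-s)) := by
        apply mul_le_mul_of_nonneg_left hkey (by positivity)

lemma F_antitone (s : ℝ) (hs : 0 < s) {a b : ℝ} (ha : 0 < a) (hab : a ≤ b) :
    b ^ (-s) ≤ a ^ (-s) :=
  Real.rpow_le_rpow_of_nonpos ha hab (by linarith)

lemma tail_tsum (m : ℕ) (hm : 1 ≤ m) (s C : ℝ) (hC : 0 ≤ C) (hs : 0 < s) :
    ∑' n : ℕ, (if m < n then ENNReal.ofReal (C * (((n:ℝ)-1)^(-s) - (n:ℝ)^(-s))) else 0)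
      ≤ ENNReal.ofReal (C * ((m:ℝ))^(-s)) := by
  set v : ℕ → ℝ≥0∞ := fun n =>
    if m < n then ENNReal.ofReal (C * (((n:ℝ)-1)^(-s) - (n:ℝ)^(-s))) else 0 with hv
  rw [ENNReal.tsum_eq_iSup_sum]
  apply iSup_le
  intro F
  set M : ℕ := F.sup id with hM
  have hsub : F ⊆ Finset.range (M + 1) := by
    intro n hn
    simp only [Finset.mem_range]
    have : n ≤ M := Finset.le_sup (f := id) hn
    omega
  have h1 : ∑ n ∈ F, v n ≤ ∑ n ∈ Finset.range (M + 1), v n :=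
    Finset.sum_le_sum_of_subset hsub
  have h2 : ∑ n ∈ Finset.range (M + 1), v n
      = ∑ n ∈ (Finset.range (M + 1)).filter (fun n => m < n),
          ENNReal.ofReal (C * (((n:ℝ)-1)^(-s) - (n:ℝ)^(-s))) := by
    rw [Finset.sum_filter]
  have h3 : (Finset.range (M + 1)).filter (fun n => m < n) = Finset.Ico (m+1) (M+1) := by
    ext n
    simp only [Finset.mem_filter, Finset.mem_range, Finset.mem_Ico]
    omega
  have hnonneg : ∀ n ∈ Finset.Ico (m+1) (M+1),
      0 ≤ C * (((n:ℝ)-1)^(-s) - (n:ℝ)^(-s)) := by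
    intro n hn
    simp only [Finset.mem_Ico] at hn
    have hn1 : (1:ℝ) ≤ (n:ℝ) - 1 := by
      have : m + 1 ≤ n := hn.1
      have : (2:ℝ) ≤ (n:ℝ) := by exact_mod_cast le_trans (by omega : 2 ≤ n) le_rfl
      linarith
    have := F_antitone s hs (a := (n:ℝ)-1) (b := (n:ℝ)) (by linarith) (by linarith)
    have hsub2 : 0 ≤ ((n:ℝ)-1)^(-s) - (n:ℝ)^(-s) := by linarith
    positivity
  have h4 : ∑ n ∈ Finset.Ico (m+1) (M+1),
        ENNReal.ofReal (C * (((n:ℝ)-1)^(-s) - (n:ℝ)^(-s)))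
      = ENNReal.ofReal (∑ n ∈ Finset.Ico (m+1) (M+1),
          C * (((n:ℝ)-1)^(-s) - (n:ℝ)^(-s))) := by
    rw [ENNReal.ofReal_sum_of_nonneg hnonneg]
  have htel : ∑ n ∈ Finset.Ico (m+1) (M+1), (((n:ℝ)-1)^(-s) - (n:ℝ)^(-s))
      = ((m:ℝ))^(-s) - (((m + (M + 1 - (m+1)) : ℕ) : ℝ))^(-s) := by
    rw [Finset.sum_Ico_eq_sum_range]
    have : ∀ i, ((m+1+i:ℕ):ℝ) - 1 = ((m+i:ℕ):ℝ) := by intro i; push_cast; ring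
    calc ∑ i ∈ Finset.range (M + 1 - (m+1)), ((((m+1+i:ℕ):ℝ)-1)^(-s) - ((m+1+i:ℕ):ℝ)^(-s))
        = ∑ i ∈ Finset.range (M + 1 - (m+1)),
            ((((m+i:ℕ)):ℝ)^(-s) - (((m+(i+1):ℕ)):ℝ)^(-s)) := by
          apply Finset.sum_congr rfl
          intro i _
          rw [this i]
          congr 2
          push_cast; ring
    _ = (((m+0:ℕ)):ℝ)^(-s) - (((m + (M + 1 - (m+1)) : ℕ)):ℝ)^(-s) :=
          Finset.sum_range_sub' (fun i => (((m+i:ℕ)):ℝ)^(-s)) _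
    _ = ((m:ℝ))^(-s) - (((m + (M + 1 - (m+1)) : ℕ) : ℝ))^(-s) := by norm_num
  have h5 : ∑ n ∈ Finset.Ico (m+1) (M+1), C * (((n:ℝ)-1)^(-s) - (n:ℝ)^(-s))
      ≤ C * ((m:ℝ))^(-s) := by
    rw [← Finset.mul_sum, htel]
    have hpos : (0:ℝ) ≤ (((m + (M + 1 - (m+1)) : ℕ) : ℝ))^(-s) := by positivity
    have hmpos : (0:ℝ) ≤ ((m:ℝ))^(-s) := by positivity
    nlinarith
  calc ∑ n ∈ F, v n ≤ _ := h1
  _ = _ := h2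
  _ = _ := by rw [h3]
  _ = _ := h4
  _ ≤ ENNReal.ofReal (C * ((m:ℝ))^(-s)) := ENNReal.ofReal_le_ofReal h5

end LRP17

open LongRangePercolation

/-- For long-range percolation on `ℤ^d`, if `d < β' < 2d`, `j ∈ ℕ` and
`K(j) ≥ 2` is such that `P(D(0,x) ≤ j) ≤ K(j)^{β'} ‖x‖^{-β'}` for all `‖x‖ > K(j)`, then
`E|B_j| ≤ 5^d (1 + d/(β' - d)) K(j)^d`. -/
theorem stmt17 {d : ℕ} {Ω : Type*} [MeasurableSpace Ω] (μ : Measure Ω)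
    (edge : Sym2 (Vtx d) → Ω → Bool) (lam : ℝ → ℝ)
    (hmodel : IsLRPModel d μ edge lam)
    (β' : ℝ) (h1 : (d : ℝ) < β') (h2 : β' < 2 * (d : ℝ))
    (j : ℕ) (Kj : ℝ) (hKj : 2 ≤ Kj)
    (hbound : ∀ x : Vtx d, Kj < ‖x‖ →
        μ {ω | (percGraph edge ω).edist 0 x ≤ (j : ℕ∞)} ≤
          ENNReal.ofReal (Kj ^ β' * ‖x‖ ^ (-β'))) :
    EB μ edge j ≤ ENNReal.ofReal ((5 : ℝ) ^ d * (1 + (d : ℝ) / (β' - (d : ℝ))) * Kj ^ d) := by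
  classical
  haveI := hmodel.prob
  have hd1 : 1 ≤ d := hmodel.d_pos
  have hKj0 : (0:ℝ) < Kj := by linarith
  set s : ℝ := β' - d with hsdef
  have hs : 0 < s := by rw [hsdef]; linarith
  have hsd : s ≤ (d:ℝ) := by rw [hsdef]; linarith
  set m : ℕ := ⌊Kj⌋₊ with hmdef
  have hm2 : 2 ≤ m := Nat.le_floor (by exact_mod_cast hKj)
  have hmK : (m:ℝ) ≤ Kj := Nat.floor_le (le_of_lt hKj0)
  have hKm : Kj < (m:ℝ) + 1 := Nat.lt_floor_add_one Kj
  have hEmeas : ∀ x : Vtx d,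
      MeasurableSet {ω | (percGraph edge ω).edist 0 x ≤ (j:ℕ∞)} :=
    fun x => LRP17.measurable_edist_le edge hmodel.meas x j
  -- Step 1: `EB` as a sum over vertices
  have hEB : EB μ edge j
      = ∑' x : Vtx d, μ {ω | (percGraph edge ω).edist 0 x ≤ (j:ℕ∞)} := by
    rw [EB]
    have hpt : ∀ ω : Ω, ((ball edge ω j).encard : ℝ≥0∞)
        = ∑' x : Vtx d,
            ({ω' | (percGraph edge ω').edist 0 x ≤ (j:ℕ∞)}.indicator
              (fun _ => (1:ℝ≥0∞)) ω) := by
      intro ω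
      calc ((ball edge ω j).encard : ℝ≥0∞)
          = ∑' (x : (ball edge ω j)), (1:ℝ≥0∞) :=
            (ENNReal.tsum_set_one (ball edge ω j)).symm
      _ = ∑' x : Vtx d, (ball edge ω j).indicator (fun _ => (1:ℝ≥0∞)) x :=
            tsum_subtype (ball edge ω j) (fun _ => (1:ℝ≥0∞))
      _ = _ := by
            apply tsum_congr
            intro x
            by_cases hx : x ∈ ball edge ω j
            · have hx' : ω ∈ {ω' | (percGraph edge ω').edist 0 x ≤ (j:ℕ∞)} := hx
              rw [Set.indicator_of_mem hx, Set.indicator_of_mem hx']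
            · have hx' : ω ∉ {ω' | (percGraph edge ω').edist 0 x ≤ (j:ℕ∞)} := hx
              rw [Set.indicator_of_notMem hx, Set.indicator_of_notMem hx']
    simp_rw [hpt]
    rw [lintegral_tsum (fun x => (measurable_const.indicator (hEmeas x)).aemeasurable)]
    apply tsum_congr
    intro x
    rw [lintegral_indicator (hEmeas x)]
    simp
  -- Step 2: pointwise bound on the summands
  set A : Set (Vtx d) := {x | m < LRP17.Nx x} with hA
  set g : Vtx d → ℝ≥0∞ :=
    fun x => ENNReal.ofReal (Kj^β' * ((LRP17.Nx x : ℝ))^(-β')) with hg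
  have hpoint : ∀ x : Vtx d, μ {ω | (percGraph edge ω).edist 0 x ≤ (j:ℕ∞)}
      ≤ Aᶜ.indicator (fun _ => (1:ℝ≥0∞)) x + A.indicator g x := by
    intro x
    by_cases hx : x ∈ A
    · rw [Set.indicator_of_notMem (by simpa using hx),
        Set.indicator_of_mem hx, zero_add]
      have hmx : m < LRP17.Nx x := hx
      have hxK : Kj < ‖x‖ := by
        rw [LRP17.norm_eq_Nx]
        calc Kj < (m:ℝ) + 1 := hKm
        _ ≤ (LRP17.Nx x : ℝ) := by exact_mod_cast hmx
      have hb := hbound x hxK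
      rw [LRP17.norm_eq_Nx] at hb
      exact hb
    · rw [Set.indicator_of_mem (by simpa using hx),
        Set.indicator_of_notMem hx, add_zero]
      exact prob_le_one
  -- Step 3: sum the bound
  rw [hEB]
  have hsum : ∑' x : Vtx d, μ {ω | (percGraph edge ω).edist 0 x ≤ (j:ℕ∞)}
      ≤ (∑' x : Vtx d, Aᶜ.indicator (fun _ => (1:ℝ≥0∞)) x)
        + ∑' x : Vtx d, A.indicator g x := by
    rw [← ENNReal.tsum_add]
    exact ENNReal.tsum_le_tsum hpoint
  -- Part 1: the near part
  have hpart1 : (∑' x : Vtx d, Aᶜ.indicator (fun _ => (1:ℝ≥0∞)) x)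
      ≤ ENNReal.ofReal ((5:ℝ)^d * Kj^d) := by
    rw [← tsum_subtype, ENNReal.tsum_set_one]
    have hAc : Aᶜ = {x : Vtx d | LRP17.Nx x ≤ m} := by
      ext x; simp [hA, not_lt]
    rw [hAc, LRP17.encard_Nx_le]
    rw [ENat.toENNReal_coe]
    refine le_trans (le_of_eq (ENNReal.ofReal_natCast ((2*m+1)^d)).symm) ?_
    apply ENNReal.ofReal_le_ofReal
    push_cast
    calc ((2*(m:ℝ)+1))^d ≤ (5*Kj)^d := by
          apply pow_le_pow_left₀ (by positivity)
          linarith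
    _ = 5^d * Kj^d := mul_pow _ _ _
  -- Part 2: the far part
  set C : ℝ := 2*d*(7/3:ℝ)^(d-1) * Kj^β' / s with hC
  have hC0 : 0 ≤ C := by
    rw [hC]
    have : (0:ℝ) < Kj^β' := Real.rpow_pos_of_pos hKj0 _
    positivity
  set c : ℕ → ℝ≥0∞ := fun n =>
    if m < n then ENNReal.ofReal (Kj^β' * ((n:ℝ))^(-β')) else 0 with hc
  have hpart2 : (∑' x : Vtx d, A.indicator g x)
      ≤ ENNReal.ofReal ((5:ℝ)^d * ((d:ℝ)/s) * Kj^d) := by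
    have hind : ∀ x : Vtx d, A.indicator g x = c (LRP17.Nx x) := by
      intro x
      by_cases hx : x ∈ A
      · rw [Set.indicator_of_mem hx]
        have hmx : m < LRP17.Nx x := hx
        simp [hg, hc, hmx]
      · rw [Set.indicator_of_notMem hx]
        have hmx : ¬ m < LRP17.Nx x := hx
        simp [hc, hmx]
    simp_rw [hind]
    -- reindex by the fibers of `Nx`
    have hfib : ∑' x : Vtx d, c (LRP17.Nx x)
        = ∑' n : ℕ, ({x : Vtx d | LRP17.Nx x = n}.encard : ℝ≥0∞) * c n := by
      rw [← (Equiv.sigmaFiberEquiv (LRP17.Nx (d := d))).tsum_eq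
        (fun x => c (LRP17.Nx x)), ENNReal.tsum_sigma']
      apply tsum_congr
      intro n
      rw [← ENNReal.tsum_set_const {x : Vtx d | LRP17.Nx x = n} (c n)]
      apply tsum_congr
      intro x
      simp only [Equiv.sigmaFiberEquiv, Equiv.coe_fn_mk]
      rw [x.2]
    rw [hfib]
    have hterm : ∀ n : ℕ,
        ({x : Vtx d | LRP17.Nx x = n}.encard : ℝ≥0∞) * c n
        ≤ (if m < n then ENNReal.ofReal (C * (((n:ℝ)-1)^(-s) - (n:ℝ)^(-s))) else 0) := by
      intro n
      by_cases hn : m < n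
      · simp only [hc, hn, if_true]
        have hn3 : 3 ≤ n := by omega
        have hen := LRP17.encard_Nx_eq_le (d := d) n (by omega)
        calc ({x : Vtx d | LRP17.Nx x = n}.encard : ℝ≥0∞)
              * ENNReal.ofReal (Kj^β' * ((n:ℝ))^(-β'))
            ≤ ((((2*n+1)^d - (2*(n-1)+1)^d : ℕ) : ℕ∞) : ℝ≥0∞)
              * ENNReal.ofReal (Kj^β' * ((n:ℝ))^(-β')) := by
              apply mul_le_mul_left
              exact_mod_cast ENat.toENNReal_le.mpr hen
        _ = ENNReal.ofReal ((((2*n+1)^d - (2*(n-1)+1)^d : ℕ) : ℝ))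
              * ENNReal.ofReal (Kj^β' * ((n:ℝ))^(-β')) := by
              rw [ENat.toENNReal_coe, ENNReal.ofReal_natCast]
        _ = ENNReal.ofReal ((((2*n+1)^d - (2*(n-1)+1)^d : ℕ) : ℝ)
              * (Kj^β' * ((n:ℝ))^(-β'))) :=
              (ENNReal.ofReal_mul (by positivity)).symm
        _ ≤ ENNReal.ofReal (C * (((n:ℝ)-1)^(-s) - (n:ℝ)^(-s))) := by
              apply ENNReal.ofReal_le_ofReal
              rw [hC]
              exact LRP17.shell_bound d hd1 s β' Kj hs (by rw [hsdef]; ring) hKj0 n hn3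
      · simp only [hc, hn, if_false, mul_zero, le_refl]
    calc ∑' n : ℕ, ({x : Vtx d | LRP17.Nx x = n}.encard : ℝ≥0∞) * c n
        ≤ ∑' n : ℕ, (if m < n then
            ENNReal.ofReal (C * (((n:ℝ)-1)^(-s) - (n:ℝ)^(-s))) else 0) :=
          ENNReal.tsum_le_tsum hterm
    _ ≤ ENNReal.ofReal (C * ((m:ℝ))^(-s)) :=
          LRP17.tail_tsum m (by omega) s C hC0 hs
    _ ≤ ENNReal.ofReal ((5:ℝ)^d * ((d:ℝ)/s) * Kj^d) := by
          apply ENNReal.ofReal_le_ofReal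
          -- final numeric estimate
          have hmhalf : Kj/2 ≤ (m:ℝ) := by linarith
          have h1 : ((m:ℝ))^(-s) ≤ (Kj/2)^(-s) :=
            LRP17.F_antitone s hs (by linarith) hmhalf
          have h2 : (Kj/2)^(-s) = Kj^(-s) * (2:ℝ)^s := by
            rw [div_eq_mul_inv, Real.mul_rpow (le_of_lt hKj0) (by norm_num),
              Real.inv_rpow (by norm_num), ← Real.rpow_neg (by norm_num : (0:ℝ) ≤ 2)]
            ring_nf
          have h3 : (2:ℝ)^s ≤ 2^(d:ℝ) :=
            Real.rpow_le_rpow_of_exponent_le one_le_two hsd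
          have h4 : (2:ℝ)^((d:ℕ):ℝ) = 2^(d:ℕ) := Real.rpow_natCast 2 d
          have h5 : Kj^β' * Kj^(-s) = Kj^(d:ℕ) := by
            rw [← Real.rpow_add hKj0, show β' + -s = ((d:ℕ):ℝ) by rw [hsdef]; ring]
            exact Real.rpow_natCast Kj d
          have hKβ : (0:ℝ) < Kj^β' := Real.rpow_pos_of_pos hKj0 _
          have h6 : ((m:ℝ))^(-s) ≤ Kj^(-s) * 2^(d:ℕ) := by
            calc ((m:ℝ))^(-s) ≤ Kj^(-s) * (2:ℝ)^s := by rw [← h2]; exact h1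
            _ ≤ Kj^(-s) * 2^(d:ℕ) := by
                apply mul_le_mul_of_nonneg_left _ (by positivity)
                rw [← h4]; exact h3
          calc C * ((m:ℝ))^(-s)
              = (2*d*(7/3:ℝ)^(d-1)/s) * (Kj^β' * ((m:ℝ))^(-s)) := by
                rw [hC]; ring
          _ ≤ (2*d*(7/3:ℝ)^(d-1)/s) * (Kj^β' * (Kj^(-s) * 2^(d:ℕ))) := by
                apply mul_le_mul_of_nonneg_left _ (by positivity)
                exact mul_le_mul_of_nonneg_left h6 (le_of_lt hKβ)
          _ = ((2:ℝ)^(d+1) * (7/3:ℝ)^(d-1)) * (((d:ℝ)/s) * Kj^(d:ℕ)) := by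
                rw [← h5]
                field_simp
                ring
          _ ≤ (5:ℝ)^d * (((d:ℝ)/s) * Kj^(d:ℕ)) := by
                apply mul_le_mul_of_nonneg_right (LRP17.const_pow_le d hd1)
                positivity
          _ = (5:ℝ)^d * ((d:ℝ)/s) * Kj^d := by ring
  -- assemble everything
  have hfinal : ENNReal.ofReal ((5:ℝ)^d * Kj^d)
      + ENNReal.ofReal ((5:ℝ)^d * ((d:ℝ)/s) * Kj^d)
      = ENNReal.ofReal ((5:ℝ)^d * (1 + (d:ℝ)/(β' - (d:ℝ))) * Kj^d) := by
    rw [← ENNReal.ofReal_add (by positivity) (by positivity)]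
    congr 1
    rw [hsdef]
    ring
  calc ∑' x : Vtx d, μ {ω | (percGraph edge ω).edist 0 x ≤ (j:ℕ∞)}
      ≤ _ := hsum
  _ ≤ ENNReal.ofReal ((5:ℝ)^d * Kj^d)
      + ENNReal.ofReal ((5:ℝ)^d * ((d:ℝ)/s) * Kj^d) := add_le_add hpart1 hpart2
  _ = _ := hfinal
end
end
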